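/- For every choice of real coefficients h¹_a, h²_a (a ∈ {x,y,z}) and J_{a,b} (a,b ∈ {x,y,z}), let H := Σ_a h¹_a (σ_a ⊗ 1) + Σ_a h²_a (1 ⊗ σ_a) + Σ_{a,b} J_{a,b} (σ_a ⊗ σ_b). Then there exists a finite γ_c ≥ 0 such that for every γ ≥ γ_c there is a real matrix M indexed by the 36 two-qubit configurations with M_{C,C'} ≥ 0 for all C ≠ C', Σ_C M_{C,C'} = 0 for every C', and for every configuration C: i(H·P_C − P_C·H) + γ·(Σ_a 𝒟[σ_a⊗1](P_C) + Σ_a 𝒟[1⊗σ_a](P_C) + Σ_{a,b} 𝒟[σ_a⊗σ_b](P_C)) = Σ_{C'} M_{C,C'} • P_{C'}. -/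

import Mathlib

open Matrix Kronecker Finset
open scoped Classical

noncomputable section

/-- The Pauli matrices σ_x, σ_y, σ_z, indexed by `0, 1, 2 : Fin 3`. -/
def σp : Fin 3 → Matrix (Fin 2) (Fin 2) ℂ :=
  ![!![0, 1; 1, 0], !![0, -Complex.I; Complex.I, 0], !![1, 0; 0, -1]]

/-- The sign values `+1, −1`, indexed by `Fin 2`. -/
def sgn : Fin 2 → ℝ := ![1, -1]

/-- The spin projector `P_{s,α} = (1/2)(1 + s • σ_α)`. -/
def Pspin (s : ℝ) (α : Fin 3) : Matrix (Fin 2) (Fin 2) ℂ :=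
  (2 : ℂ)⁻¹ • (1 + (s : ℂ) • σp α)

/-- A single-qubit classical configuration: a sign and an axis. -/
abbrev Conf1 := Fin 2 × Fin 3

/-- The projector attached to a single-qubit configuration. -/
def Pc (c : Conf1) : Matrix (Fin 2) (Fin 2) ℂ := Pspin (sgn c.1) c.2

/-- A two-qubit classical configuration. -/
abbrev Conf2 := Conf1 × Conf1

/-- The projector attached to a two-qubit configuration (Kronecker product). -/
def Pc2 (C : Conf2) : Matrix (Fin 2 × Fin 2) (Fin 2 × Fin 2) ℂ :=
  Pc C.1 ⊗ₖ Pc C.2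

/-- Dual dissipative channel `𝒟[A](X) = A† X A − (1/2)(A†A X + X A†A)`. -/
def Dcal {n : Type*} [Fintype n] (A X : Matrix n n ℂ) : Matrix n n ℂ :=
  Aᴴ * X * A - (2 : ℂ)⁻¹ • (Aᴴ * A * X + X * (Aᴴ * A))

/-- **Universal noise.** For any two-qubit Hamiltonian built from single-site and
pairwise Pauli terms, there is a finite critical noise strength `γc ≥ 0` such that for
every `γ ≥ γc` the dynamics with uniform (depolarizing) two-site noise of strength `γ`
admits a decomposition over configuration projectors with nonnegative off-diagonal
rates and vanishing column sums. -/
def τ : Fin 4 → Matrix (Fin 2) (Fin 2) ℂ := Fin.cons 1 σp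

lemma sigma_sa (a : Fin 3) : (σp a)ᴴ = σp a := by
  fin_cases a <;> ext i j <;> fin_cases i <;> fin_cases j <;>
    simp [σp, conjTranspose_apply]

lemma sigma_sq (a : Fin 3) : σp a * σp a = 1 := by
  fin_cases a <;> ext i j <;> fin_cases i <;> fin_cases j <;>
    simp [σp, Matrix.mul_apply, Fin.sum_univ_succ]

lemma sigma_trace (a : Fin 3) : (σp a).trace = 0 := by
  fin_cases a <;> simp [σp, Matrix.trace, Fin.sum_univ_succ]

lemma kron_conjT (A B : Matrix (Fin 2) (Fin 2) ℂ) : (A ⊗ₖ B)ᴴ = Aᴴ ⊗ₖ Bᴴ := by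
  ext ⟨i,i'⟩ ⟨j,j'⟩
  simp [conjTranspose_apply, Matrix.kroneckerMap_apply, mul_comm]

lemma sum_kron_sum {ι κ : Type*} [Fintype ι] [Fintype κ]
    (f : ι → Matrix (Fin 2) (Fin 2) ℂ) (g : κ → Matrix (Fin 2) (Fin 2) ℂ) :
    (∑ i, f i) ⊗ₖ (∑ j, g j) = ∑ i, ∑ j, f i ⊗ₖ g j := by
  ext ⟨a,a'⟩ ⟨b,b'⟩
  simp [Matrix.kroneckerMap_apply, Matrix.sum_apply, Finset.sum_mul, Finset.mul_sum]
  rw [Finset.sum_comm]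

lemma smul_kron_smul (c d : ℂ) (A B : Matrix (Fin 2) (Fin 2) ℂ) :
    (c • A) ⊗ₖ (d • B) = (c * d) • (A ⊗ₖ B) := by
  ext ⟨a,a'⟩ ⟨b,b'⟩
  simp [Matrix.kroneckerMap_apply]; ring

lemma real_smul_mat (r : ℝ) (X : Matrix (Fin 2 × Fin 2) (Fin 2 × Fin 2) ℂ) :
    ((r : ℂ)) • X = r • X := by
  ext i j; simp [Complex.real_smul]

-- decomposition of τ in terms of spin projectors
def uu : Fin 4 → Fin 2 → ℝ := fun a s => if a = 0 then 1 else sgn s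
def ax : Fin 4 → Fin 3 := Fin.cons 0 id

lemma tau_decomp (a : Fin 4) :
    τ a = ∑ s : Fin 2, ((uu a s : ℝ) : ℂ) • Pc (s, ax a) := by
  induction a using Fin.cases with
  | zero => simp [τ, uu, ax, sgn, Pc, Pspin, Fin.sum_univ_succ]; module
  | succ i =>
      simp [τ, uu, ax, sgn, Pc, Pspin, Fin.sum_univ_succ, Fin.succ_ne_zero]
      module

abbrev Vspan : Submodule ℝ (Matrix (Fin 2 × Fin 2) (Fin 2 × Fin 2) ℂ) :=
  Submodule.span ℝ (Set.range Pc2)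

lemma basis_mem (a b : Fin 4) : τ a ⊗ₖ τ b ∈ Vspan := by
  rw [tau_decomp a, tau_decomp b, sum_kron_sum]
  apply Submodule.sum_mem; intro s _
  apply Submodule.sum_mem; intro t _
  rw [smul_kron_smul, ← Complex.ofReal_mul, real_smul_mat]
  exact Submodule.smul_mem _ _ (Submodule.subset_span ⟨((s, ax a), (t, ax b)), rfl⟩)

set_option maxHeartbeats 1000000 in
lemma twirl (X : Matrix (Fin 2 × Fin 2) (Fin 2 × Fin 2) ℂ) :
    ∑ a : Fin 4, ∑ b : Fin 4, (τ a ⊗ₖ τ b) * X * (τ a ⊗ₖ τ b) = (4 * X.trace) • 1 := by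
  ext ⟨i,i'⟩ ⟨l,l'⟩
  fin_cases i <;> fin_cases i' <;> fin_cases l <;> fin_cases l' <;>
  · simp [Matrix.sum_apply, Matrix.mul_apply, Matrix.kroneckerMap_apply,
      Fintype.sum_prod_type, Fin.sum_univ_succ, τ, σp, Matrix.trace, Matrix.diag,
      Matrix.one_apply, Fin.cons]
    try ring_nf
    try simp [Complex.I_sq, Prod.ext_iff]
    try ring

set_option maxHeartbeats 4000000 in
lemma complete (X : Matrix (Fin 2 × Fin 2) (Fin 2 × Fin 2) ℂ) :
    X = ∑ a : Fin 4, ∑ b : Fin 4,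
      ((4:ℂ)⁻¹ * ((τ a ⊗ₖ τ b) * X).trace) • (τ a ⊗ₖ τ b) := by
  ext ⟨i,i'⟩ ⟨j,j'⟩
  fin_cases i <;> fin_cases i' <;> fin_cases j <;> fin_cases j' <;>
  · simp [Matrix.sum_apply, Matrix.mul_apply, Matrix.kroneckerMap_apply,
      Fintype.sum_prod_type, Fin.sum_univ_succ, τ, σp, Matrix.trace, Matrix.diag,
      Matrix.one_apply, Fin.cons]
    try ring_nf
    try simp [Complex.I_sq, Prod.ext_iff]
    try ring

lemma tau_sa (a : Fin 4) : (τ a)ᴴ = τ a := by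
  induction a using Fin.cases with
  | zero => simp [τ]
  | succ i => simp [τ, sigma_sa]

lemma selfAdjoint_mem (X : Matrix (Fin 2 × Fin 2) (Fin 2 × Fin 2) ℂ)
    (hX : Xᴴ = X) : X ∈ Vspan := by
  rw [complete X]
  apply Submodule.sum_mem; intro a _
  apply Submodule.sum_mem; intro b _
  set c : ℂ := (4:ℂ)⁻¹ * ((τ a ⊗ₖ τ b) * X).trace with hc
  have hsa : (τ a ⊗ₖ τ b)ᴴ = τ a ⊗ₖ τ b := by rw [kron_conjT, tau_sa, tau_sa]
  have htr : star (((τ a ⊗ₖ τ b) * X).trace) = ((τ a ⊗ₖ τ b) * X).trace := by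
    rw [← Matrix.trace_conjTranspose, Matrix.conjTranspose_mul, hX, hsa,
      Matrix.trace_mul_comm]
  have hreal : (starRingEnd ℂ) c = c := by
    rw [hc, _root_.map_mul]
    rw [show ((starRingEnd ℂ) ((4:ℂ)⁻¹)) = (4:ℂ)⁻¹ by simp [Complex.ext_iff]]
    rw [show ((starRingEnd ℂ) (((τ a ⊗ₖ τ b) * X).trace)) = ((τ a ⊗ₖ τ b) * X).trace from htr]
  have : c = ((c.re : ℝ) : ℂ) := ((Complex.conj_eq_iff_re).1 hreal).symm
  rw [this, real_smul_mat]
  exact Submodule.smul_mem _ _ (basis_mem a b)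

lemma Pc_trace (c : Conf1) : (Pc c).trace = 1 := by
  simp [Pc, Pspin, Matrix.trace_smul, Matrix.trace_add, Matrix.trace_one, sigma_trace]

lemma Pc2_trace (C : Conf2) : (Pc2 C).trace = 1 := by
  rw [Pc2, Matrix.trace_kronecker, Pc_trace, Pc_trace, one_mul]

lemma Pc_sa (c : Conf1) : (Pc c)ᴴ = Pc c := by
  simp [Pc, Pspin, Matrix.conjTranspose_smul, Matrix.conjTranspose_add,
    sigma_sa, Complex.conj_ofReal]

lemma Pc2_sa (C : Conf2) : (Pc2 C)ᴴ = Pc2 C := by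
  rw [Pc2, kron_conjT, Pc_sa, Pc_sa]

lemma Pc_pair_sum (α : Fin 3) : Pc (0, α) + Pc (1, α) = 1 := by
  simp [Pc, Pspin, sgn]
  module

lemma sum_Pc : ∑ c : Conf1, Pc c = (3:ℂ) • 1 := by
  rw [Fintype.sum_prod_type_right]
  calc ∑ α : Fin 3, ∑ s : Fin 2, Pc (s, α)
      = ∑ α : Fin 3, (1 : Matrix (Fin 2) (Fin 2) ℂ) := by
        refine Finset.sum_congr rfl fun α _ => ?_
        rw [Fin.sum_univ_succ, Fin.sum_univ_succ, Fin.sum_univ_zero]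
        simpa using Pc_pair_sum α
    _ = (3:ℂ) • 1 := by
        rw [Fin.sum_univ_succ, Fin.sum_univ_succ, Fin.sum_univ_succ, Fin.sum_univ_zero]
        module

lemma sum_Pc2 : ∑ C : Conf2, Pc2 C = (9:ℂ) • (1 : Matrix (Fin 2 × Fin 2) (Fin 2 × Fin 2) ℂ) := by
  rw [Fintype.sum_prod_type]
  have : ∑ c : Conf1, ∑ c' : Conf1, Pc2 (c, c') = (∑ c : Conf1, Pc c) ⊗ₖ (∑ c : Conf1, Pc c) := by
    rw [sum_kron_sum]; rfl
  rw [this, sum_Pc, smul_kron_smul, Matrix.one_kronecker_one]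
  norm_num

lemma Dcal_eq {A : Matrix (Fin 2 × Fin 2) (Fin 2 × Fin 2) ℂ} (hsa : Aᴴ = A)
    (hsq : A * A = 1) (X : Matrix (Fin 2 × Fin 2) (Fin 2 × Fin 2) ℂ) :
    Dcal A X = A * X * A - X := by
  rw [Dcal, hsa, hsq, one_mul, mul_one]
  congr 1
  rw [← two_smul ℂ X, smul_smul]
  norm_num

lemma jump1_sa (a : Fin 3) : (σp a ⊗ₖ (1 : Matrix (Fin 2) (Fin 2) ℂ))ᴴ = σp a ⊗ₖ 1 := by
  rw [kron_conjT, sigma_sa, Matrix.conjTranspose_one]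
lemma jump2_sa (a : Fin 3) : ((1 : Matrix (Fin 2) (Fin 2) ℂ) ⊗ₖ σp a)ᴴ = 1 ⊗ₖ σp a := by
  rw [kron_conjT, sigma_sa, Matrix.conjTranspose_one]
lemma jump3_sa (a b : Fin 3) : (σp a ⊗ₖ σp b)ᴴ = σp a ⊗ₖ σp b := by
  rw [kron_conjT, sigma_sa, sigma_sa]
lemma jump1_sq (a : Fin 3) :
    (σp a ⊗ₖ (1 : Matrix (Fin 2) (Fin 2) ℂ)) * (σp a ⊗ₖ 1) = 1 := by
  rw [← Matrix.mul_kronecker_mul, sigma_sq, one_mul, Matrix.one_kronecker_one]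
lemma jump2_sq (a : Fin 3) :
    ((1 : Matrix (Fin 2) (Fin 2) ℂ) ⊗ₖ σp a) * (1 ⊗ₖ σp a) = 1 := by
  rw [← Matrix.mul_kronecker_mul, sigma_sq, one_mul, Matrix.one_kronecker_one]
lemma jump3_sq (a b : Fin 3) : (σp a ⊗ₖ σp b) * (σp a ⊗ₖ σp b) = 1 := by
  rw [← Matrix.mul_kronecker_mul, sigma_sq, sigma_sq, Matrix.one_kronecker_one]

lemma Dtot (C : Conf2) :
    (∑ a : Fin 3, Dcal (σp a ⊗ₖ (1 : Matrix (Fin 2) (Fin 2) ℂ)) (Pc2 C))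
      + (∑ a : Fin 3, Dcal ((1 : Matrix (Fin 2) (Fin 2) ℂ) ⊗ₖ σp a) (Pc2 C))
      + (∑ a : Fin 3, ∑ b : Fin 3, Dcal (σp a ⊗ₖ σp b) (Pc2 C))
    = (4:ℝ) • 1 - (16:ℝ) • Pc2 C := by
  have ht := twirl (Pc2 C)
  rw [Pc2_trace, mul_one] at ht
  have e1 : ∀ a : Fin 3, Dcal (σp a ⊗ₖ (1 : Matrix (Fin 2) (Fin 2) ℂ)) (Pc2 C)
      = (σp a ⊗ₖ 1) * Pc2 C * (σp a ⊗ₖ 1) - Pc2 C :=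
    fun a => Dcal_eq (jump1_sa a) (jump1_sq a) _
  have e2 : ∀ a : Fin 3, Dcal ((1 : Matrix (Fin 2) (Fin 2) ℂ) ⊗ₖ σp a) (Pc2 C)
      = (1 ⊗ₖ σp a) * Pc2 C * (1 ⊗ₖ σp a) - Pc2 C :=
    fun a => Dcal_eq (jump2_sa a) (jump2_sq a) _
  have e3 : ∀ a b : Fin 3, Dcal (σp a ⊗ₖ σp b) (Pc2 C)
      = (σp a ⊗ₖ σp b) * Pc2 C * (σp a ⊗ₖ σp b) - Pc2 C :=
    fun a b => Dcal_eq (jump3_sa a b) (jump3_sq a b) _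
  simp only [e1, e2, e3]
  simp only [Fin.sum_univ_succ, Fin.sum_univ_zero, τ, Fin.cons_zero, Fin.cons_succ,
    Matrix.one_kronecker_one, Matrix.one_mul, Matrix.mul_one, add_zero,
    Fin.succ_zero_eq_one, Fin.succ_one_eq_two] at ht ⊢
  rw [← real_smul_mat 4, ← real_smul_mat 16]
  push_cast
  rw [← ht]
  module

lemma sum_Pc2' : ∑ C : Conf2, Pc2 C = (9:ℝ) • (1 : Matrix (Fin 2 × Fin 2) (Fin 2 × Fin 2) ℂ) := by
  rw [sum_Pc2, ← real_smul_mat 9]; push_cast; rfl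


theorem universal_noise_two_qubit
    (h1 h2 : Fin 3 → ℝ) (J : Fin 3 → Fin 3 → ℝ)
    (H : Matrix (Fin 2 × Fin 2) (Fin 2 × Fin 2) ℂ)
    (hH : H = ∑ a : Fin 3, (h1 a : ℂ) • (σp a ⊗ₖ (1 : Matrix (Fin 2) (Fin 2) ℂ))
        + ∑ a : Fin 3, (h2 a : ℂ) • ((1 : Matrix (Fin 2) (Fin 2) ℂ) ⊗ₖ σp a)
        + ∑ a : Fin 3, ∑ b : Fin 3, (J a b : ℂ) • (σp a ⊗ₖ σp b)) :
    ∃ γc : ℝ, 0 ≤ γc ∧ ∀ γ : ℝ, γc ≤ γ →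
      ∃ M : Conf2 → Conf2 → ℝ,
        (∀ C C', C ≠ C' → 0 ≤ M C C') ∧
        (∀ C', ∑ C : Conf2, M C C' = 0) ∧
        (∀ C : Conf2,
          Complex.I • (H * Pc2 C - Pc2 C * H)
            + γ • (∑ a : Fin 3, Dcal (σp a ⊗ₖ (1 : Matrix (Fin 2) (Fin 2) ℂ)) (Pc2 C)
              + ∑ a : Fin 3, Dcal ((1 : Matrix (Fin 2) (Fin 2) ℂ) ⊗ₖ σp a) (Pc2 C)
              + ∑ a : Fin 3, ∑ b : Fin 3, Dcal (σp a ⊗ₖ σp b) (Pc2 C))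
          = ∑ C' : Conf2, M C C' • Pc2 C') := by
  have hHsa : Hᴴ = H := by
    rw [hH]
    simp [Matrix.conjTranspose_add, Matrix.conjTranspose_sum, Matrix.conjTranspose_smul,
      kron_conjT, sigma_sa, Complex.conj_ofReal, Matrix.conjTranspose_one]
  set L : Conf2 → Matrix (Fin 2 × Fin 2) (Fin 2 × Fin 2) ℂ :=
    fun C => Complex.I • (H * Pc2 C - Pc2 C * H) with hLdef
  have hLsa : ∀ C, (L C)ᴴ = L C := by
    intro C
    simp only [hLdef]
    rw [Matrix.conjTranspose_smul, Matrix.conjTranspose_sub, Matrix.conjTranspose_mul,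
      Matrix.conjTranspose_mul, hHsa, Pc2_sa]
    rw [show (star Complex.I) = -Complex.I from Complex.star_def ▸ Complex.conj_I]
    module
  have hrep : ∀ C, ∃ rr : Conf2 → ℝ, ∑ C', rr C' • Pc2 C' = L C := by
    intro C
    exact (Submodule.mem_span_range_iff_exists_fun ℝ).1 (selfAdjoint_mem _ (hLsa C))
  choose r hr using hrep
  set v : Conf2 → ℝ := fun C' => ∑ C, r C C' with hv
  have hsumL : ∑ C, L C = 0 := by
    have h0 : ∑ x : Conf2, (H * Pc2 x - Pc2 x * H) = 0 := by
      rw [Finset.sum_sub_distrib, ← Finset.mul_sum, ← Finset.sum_mul, sum_Pc2']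
      simp
    simp only [hLdef]
    rw [← Finset.smul_sum, h0, smul_zero]
  have hvP : ∑ C', v C' • Pc2 C' = 0 := by
    calc ∑ C', v C' • Pc2 C' = ∑ C', ∑ C, r C C' • Pc2 C' := by
          simp [hv, Finset.sum_smul]
      _ = ∑ C, ∑ C', r C C' • Pc2 C' := Finset.sum_comm
      _ = ∑ C, L C := by simp only [hr]
      _ = 0 := hsumL
  set S : ℝ := ∑ C : Conf2, ∑ C' : Conf2, |r C C' - v C' / 36| with hS
  have hS0 : 0 ≤ S := by positivity
  refine ⟨(9/4) * S, by positivity, ?_⟩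
  intro γ hγ
  refine ⟨fun C C' => r C C' - v C' / 36 + γ * (4/9) - (if C = C' then 16 * γ else 0),
    ?_, ?_, ?_⟩
  · intro C C' hne
    simp only [if_neg hne]
    have habs : |r C C' - v C' / 36| ≤ S := by
      rw [hS]
      calc |r C C' - v C' / 36| ≤ ∑ C'', |r C C'' - v C'' / 36| :=
            Finset.single_le_sum (f := fun C'' => |r C C'' - v C'' / 36|)
              (fun i _ => abs_nonneg _) (Finset.mem_univ C')
        _ ≤ S := Finset.single_le_sum
            (f := fun C0 => ∑ C'', |r C0 C'' - v C'' / 36|)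
            (fun i _ => Finset.sum_nonneg fun _ _ => abs_nonneg _) (Finset.mem_univ C)
    have := neg_abs_le (r C C' - v C' / 36)
    linarith
  · intro C'
    have hite : ∑ C : Conf2, (if C = C' then (16:ℝ) * γ else 0) = 16 * γ := by
      simp
    rw [Finset.sum_sub_distrib, hite, Finset.sum_add_distrib, Finset.sum_sub_distrib]
    rw [Finset.sum_const, Finset.sum_const, Finset.card_univ]
    rw [show Fintype.card Conf2 = 36 from rfl]
    rw [show ∑ x : Conf2, r x C' = v C' from rfl, nsmul_eq_mul, nsmul_eq_mul]
    push_cast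
    ring
  · intro C
    have hD := Dtot C
    rw [show (Complex.I • (H * Pc2 C - Pc2 C * H)) = L C from rfl, hD]
    have expand : ∀ C' : Conf2,
        (r C C' - v C' / 36 + γ * (4/9) - (if C = C' then 16 * γ else 0)) • Pc2 C'
        = r C C' • Pc2 C' - (36:ℝ)⁻¹ • (v C' • Pc2 C') + (γ * (4/9)) • Pc2 C'
            - (if C = C' then (16 * γ) • Pc2 C' else 0) := by
      intro C'
      rw [sub_smul, add_smul, sub_smul, smul_smul]
      congr 2
      · congr 1; ring
      · split <;> simp
    rw [Finset.sum_congr rfl fun C' _ => expand C']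
    rw [Finset.sum_sub_distrib, Finset.sum_add_distrib, Finset.sum_sub_distrib,
      ← Finset.smul_sum, ← Finset.smul_sum, hr C, hvP, Finset.sum_ite_eq Finset.univ C,
      if_pos (Finset.mem_univ C), sum_Pc2']
    rw [smul_zero, sub_zero, smul_smul]
    rw [show γ * (4/9) * 9 = 4 * γ by ring]
    rw [smul_sub, smul_smul, smul_smul]
    rw [show γ * 4 = 4 * γ by ring, show γ * 16 = 16 * γ by ring]
    abel
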